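/- For all integers k ≥ 2, all real q ≥ k, and all integers ℓ with 1 ≤ ℓ ≤ q: (ℓ+1)·((q-ℓ)/(k-1))^(k-1) ≤ e·(q/k)^k. -/

import Mathlib

theorem stmt_2 (k : ℕ) (hk : 2 ≤ k) (q : ℝ) (hq : (k : ℝ) ≤ q)
    (ℓ : ℕ) (hℓ : 1 ≤ ℓ) (hℓq : (ℓ : ℝ) ≤ q) :
    ((ℓ : ℝ) + 1) * ((q - ℓ) / ((k : ℝ) - 1)) ^ (k - 1) ≤
      Real.exp 1 * (q / k) ^ k := by
  have hK2 : (2:ℝ) ≤ (k:ℝ) := by exact_mod_cast hk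
  have hK0 : (0:ℝ) < k := by linarith
  have hK1 : (0:ℝ) < (k:ℝ) - 1 := by linarith
  have hq0 : (0:ℝ) < q := by linarith
  set p₁ : ℝ := (ℓ:ℝ) + 1 with hp₁
  set p₂ : ℝ := (q - ℓ) / ((k:ℝ) - 1) with hp₂
  have hp₁0 : 0 ≤ p₁ := by positivity
  have hp₂0 : 0 ≤ p₂ := by
    apply div_nonneg <;> linarith
  have hw : (1/(k:ℝ)) + ((k:ℝ)-1)/(k:ℝ) = 1 := by field_simp; ring
  have hgm := Real.geom_mean_le_arith_mean2_weighted (by positivity) (by positivity) hp₁0 hp₂0 hw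
  have harith : 1/(k:ℝ) * p₁ + ((k:ℝ)-1)/(k:ℝ) * p₂ = (q+1)/(k:ℝ) := by
    rw [hp₁, hp₂]; field_simp; ring
  rw [harith] at hgm
  have hpow := pow_le_pow_left₀ (by positivity) hgm k
  have hcast : ((k - 1 : ℕ) : ℝ) = (k:ℝ) - 1 := by
    have h1 : 1 ≤ k := by omega
    push_cast [h1]; ring
  have hleft : (p₁ ^ ((1:ℝ)/(k:ℝ)) * p₂ ^ (((k:ℝ)-1)/(k:ℝ))) ^ k = p₁ * p₂ ^ (k-1) := by
    rw [mul_pow, ← Real.rpow_natCast (p₁ ^ ((1:ℝ)/(k:ℝ))) k, ← Real.rpow_natCast (p₂ ^ _) k,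
      ← Real.rpow_mul hp₁0, ← Real.rpow_mul hp₂0]
    rw [one_div, inv_mul_cancel₀ (ne_of_gt hK0), Real.rpow_one]
    have h2 : ((k:ℝ)-1)/(k:ℝ) * k = (k:ℝ) - 1 := by field_simp
    rw [h2, ← hcast, Real.rpow_natCast]
  rw [hleft] at hpow
  have hqq : (q+1)/q ≤ Real.exp (1/q) := by
    have h3 := Real.add_one_le_exp (1/q)
    have h : (q+1)/q = 1/q + 1 := by field_simp; ring
    rw [h]; exact h3
  have hexp : ((q+1)/q)^k ≤ Real.exp 1 := by
    calc ((q+1)/q)^k ≤ (Real.exp (1/q))^k := by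
          exact pow_le_pow_left₀ (by positivity) hqq k
      _ = Real.exp (k * (1/q)) := by rw [← Real.exp_nat_mul]
      _ ≤ Real.exp 1 := by
          apply Real.exp_le_exp.mpr
          rw [mul_one_div, div_le_one hq0]; exact hq
  calc p₁ * p₂ ^ (k-1) ≤ ((q+1)/(k:ℝ))^k := hpow
    _ = ((q+1)/q)^k * (q/(k:ℝ))^k := by
        rw [← mul_pow]; congr 1; field_simp
    _ ≤ Real.exp 1 * (q/(k:ℝ))^k := by
        exact mul_le_mul_of_nonneg_right hexp (by positivity)
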